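/- Let H be a closed subgroup of GL(n,ℝ) and let U ⊆ ℝⁿ be open and Hᵀ-invariant. Then the following are equivalent: (a) there exists a topological quasi-section C ⊆ U whose closure is compact and contained in U; (b) the orbit space U/Hᵀ is compact and the action of H on U is proper, i.e., the preimage of every compact subset of U × U under the map H × U → U × U, (h,ξ) ↦ (hᵀξ, ξ), is compact. Moreover, if either condition holds, then U/Hᵀ is Hausdorff and metrizable. -/
import Mathlib


open Matrix Set Topology
open scoped MatrixGroups

noncomputable section

variable {n : ℕ}

/-- The transpose action of an element of `GL(n,ℝ)` on `ℝⁿ`: `(h, ξ) ↦ hᵀ ξ`. -/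
def tAct (h : GL (Fin n) ℝ) (v : Fin n → ℝ) : Fin n → ℝ :=
  ((h : Matrix (Fin n) (Fin n) ℝ)ᵀ) *ᵥ v

/-- A set `U ⊆ ℝⁿ` is `Hᵀ`-invariant. -/
def TInvariant (H : Subgroup (GL (Fin n) ℝ)) (U : Set (Fin n → ℝ)) : Prop :=
  ∀ h ∈ H, ∀ v ∈ U, tAct h v ∈ U

/-- `HᵀC = {hᵀ c : h ∈ H, c ∈ C}`. -/
def tOrb (H : Subgroup (GL (Fin n) ℝ)) (C : Set (Fin n → ℝ)) : Set (Fin n → ℝ) :=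
  {v | ∃ h ∈ H, ∃ c ∈ C, tAct h c = v}

/-- `((Y,Z)) = {h ∈ H : hᵀY ∩ Z ≠ ∅}`, as a set of elements of `GL(n,ℝ)`. -/
def meetSet (H : Subgroup (GL (Fin n) ℝ)) (Y Z : Set (Fin n → ℝ)) :
    Set (GL (Fin n) ℝ) :=
  {h | h ∈ H ∧ ∃ y ∈ Y, tAct h y ∈ Z}

/-- `C` is a topological quasi-section for `U`: `C` is open, `HᵀC = U`, and `((C,C))`
is relatively compact. -/
def IsQuasiSection (H : Subgroup (GL (Fin n) ℝ)) (U C : Set (Fin n → ℝ)) : Prop :=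
  IsOpen C ∧ C ⊆ U ∧ tOrb H C = U ∧ IsCompact (closure (meetSet H C C))

/-- `C` is a topological section for `U`: the map `H × C → U, (h,c) ↦ hᵀc` is a
homeomorphism. -/
def IsTopSection (H : Subgroup (GL (Fin n) ℝ)) (U C : Set (Fin n → ℝ)) : Prop :=
  C ⊆ U ∧ ∃ e : (↥H × ↥C) ≃ₜ ↥U,
    ∀ (h : ↥H) (c : ↥C), ((e (h, c) : ↥U) : Fin n → ℝ) = tAct (h : GL (Fin n) ℝ) (c : Fin n → ℝ)

/-- The orbit equivalence relation on `U` induced by the transpose action of `H`.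
`Quot (orbitRel H U)` is the orbit space `U/Hᵀ`, carrying the quotient topology. -/
def orbitRel (H : Subgroup (GL (Fin n) ℝ)) (U : Set (Fin n → ℝ)) (x y : U) : Prop :=
  ∃ h ∈ H, tAct h (x : Fin n → ℝ) = (y : Fin n → ℝ)
lemma tAct_mul (g h : GL (Fin n) ℝ) (v : Fin n → ℝ) :
    tAct (g * h) v = tAct h (tAct g v) := by
  simp [tAct, Matrix.transpose_mul, Matrix.mulVec_mulVec]
lemma tAct_one (v : Fin n → ℝ) : tAct (1 : GL (Fin n) ℝ) v = v := by simp [tAct]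
lemma tAct_inv_tAct (h : GL (Fin n) ℝ) (v : Fin n → ℝ) :
    tAct h⁻¹ (tAct h v) = v := by rw [← tAct_mul, mul_inv_cancel, tAct_one]
lemma tAct_tAct_inv (h : GL (Fin n) ℝ) (v : Fin n → ℝ) :
    tAct h (tAct h⁻¹ v) = v := by rw [← tAct_mul, inv_mul_cancel, tAct_one]
lemma continuous_tAct : Continuous (fun p : GL (Fin n) ℝ × (Fin n → ℝ) => tAct p.1 p.2) :=
  Continuous.matrix_mulVec ((Units.continuous_val.comp continuous_fst).matrix_transpose)
    continuous_snd
lemma continuous_tAct_right (h : GL (Fin n) ℝ) : Continuous (tAct h) :=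
  continuous_tAct.comp (Continuous.prodMk_right h)
lemma isOpenMap_tAct (h : GL (Fin n) ℝ) : IsOpenMap (tAct h) :=
  IsOpenMap.of_inverse (continuous_tAct_right h⁻¹) (fun v => tAct_tAct_inv h v)
    (fun v => tAct_inv_tAct h v)

variable {H : Subgroup (GL (Fin n) ℝ)} {U : Set (Fin n → ℝ)}

lemma orbitRel_equiv : Equivalence (orbitRel H U) := by
  constructor
  · exact fun x => ⟨1, H.one_mem, tAct_one _⟩
  · rintro x y ⟨h, hh, hxy⟩
    exact ⟨h⁻¹, H.inv_mem hh, by rw [← hxy, tAct_inv_tAct]⟩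
  · rintro x y z ⟨g, hg, hxy⟩ ⟨h, hh, hyz⟩
    exact ⟨g * h, H.mul_mem hg hh, by rw [tAct_mul, hxy, hyz]⟩

lemma quot_mk_eq_iff (x y : U) :
    Quot.mk (orbitRel H U) x = Quot.mk (orbitRel H U) y ↔ orbitRel H U x y := by
  rw [Quot.eq]
  exact orbitRel_equiv.eqvGen_iff

lemma isOpenMap_pi (hUopen : IsOpen U) : IsOpenMap (Quot.mk (orbitRel H U)) := by
  intro V hV
  rw [isOpen_coinduced]
  have : Quot.mk (orbitRel H U) ⁻¹' (Quot.mk (orbitRel H U) '' V)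
      = ⋃ h ∈ H, (fun x : U => tAct h (x : Fin n → ℝ)) ⁻¹' (Subtype.val '' V) := by
    ext x
    simp only [mem_preimage, mem_image, mem_iUnion]
    constructor
    · rintro ⟨v, hv, hq⟩
      obtain ⟨h, hh, he⟩ := (quot_mk_eq_iff x v).1 hq.symm
      exact ⟨h, hh, v, hv, he.symm⟩
    · rintro ⟨h, hh, v, hv, he⟩
      exact ⟨v, hv, ((quot_mk_eq_iff x v).2 ⟨h, hh, he.symm⟩).symm⟩
  rw [this]
  refine isOpen_iUnion fun h => isOpen_iUnion fun hh => ?_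
  exact (hUopen.isOpenMap_subtype_val V hV).preimage
    ((continuous_tAct_right h).comp continuous_subtype_val)

lemma quot_compact {C : Set (Fin n → ℝ)} (hOrb : tOrb H C = U) (hCU : C ⊆ U)
    (hK : IsCompact (closure C)) (hKU : closure C ⊆ U) :
    CompactSpace (Quot (orbitRel H U)) := by
  constructor
  have hpre : IsCompact (Subtype.val ⁻¹' closure C : Set U) := by
    refine IsInducing.isCompact_preimage' Topology.IsInducing.subtypeVal hK ?_
    rw [Subtype.range_val]; exact hKU
  have him := hpre.image (continuous_quot_mk (r := orbitRel H U))
  convert him using 1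
  ext q
  simp only [mem_univ, true_iff, mem_image, mem_preimage]
  obtain ⟨x, rfl⟩ := Quot.exists_rep q
  have hx : (x : Fin n → ℝ) ∈ tOrb H C := by rw [hOrb]; exact x.2
  obtain ⟨h, hh, c, hc, he⟩ := hx
  refine ⟨⟨c, hCU hc⟩, subset_closure hc, ?_⟩
  exact (quot_mk_eq_iff _ _).2 ⟨h, hh, he⟩

lemma proper_of_qs (hH : IsClosed (H : Set (GL (Fin n) ℝ))) {C : Set (Fin n → ℝ)}
    (hCopen : IsOpen C) (hCU : C ⊆ U) (hOrb : tOrb H C = U)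
    (hM : IsCompact (closure (meetSet H C C)))
    {K : Set ((Fin n → ℝ) × (Fin n → ℝ))} (hKsub : K ⊆ U ×ˢ U) (hKcomp : IsCompact K) :
    IsCompact {p : GL (Fin n) ℝ × (Fin n → ℝ) |
      p.1 ∈ H ∧ p.2 ∈ U ∧ (tAct p.1 p.2, p.2) ∈ K} := by
  set E := {p : GL (Fin n) ℝ × (Fin n → ℝ) |
      p.1 ∈ H ∧ p.2 ∈ U ∧ (tAct p.1 p.2, p.2) ∈ K} with hE
  have hEclosed : IsClosed E := by
    have : E = (Prod.fst ⁻¹' (H : Set (GL (Fin n) ℝ))) ∩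
        ((fun p : GL (Fin n) ℝ × (Fin n → ℝ) => (tAct p.1 p.2, p.2)) ⁻¹' K) := by
      ext p
      simp only [hE, mem_setOf_eq, mem_inter_iff, mem_preimage]
      refine ⟨fun ⟨a, _, c⟩ => ⟨a, c⟩, fun ⟨a, c⟩ => ⟨a, (hKsub c).2, c⟩⟩
    rw [this]
    exact (hH.preimage continuous_fst).inter
      (hKcomp.isClosed.preimage (continuous_tAct.prodMk continuous_snd))
  have hcov : ∀ S : Set (Fin n → ℝ), IsCompact S → S ⊆ U →
      ∃ s : Finset ↥H, S ⊆ ⋃ h ∈ s, tAct (h : GL (Fin n) ℝ) '' C := by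
    intro S hS hSU
    apply hS.elim_finite_subcover (fun h : ↥H => tAct (h : GL (Fin n) ℝ) '' C)
      (fun h => isOpenMap_tAct _ C hCopen)
    intro x hx
    have : x ∈ tOrb H C := by rw [hOrb]; exact hSU hx
    obtain ⟨h, hh, c, hc, he⟩ := this
    exact mem_iUnion.2 ⟨⟨h, hh⟩, c, hc, he⟩
  obtain ⟨s, hs⟩ := hcov (Prod.fst '' K) (hKcomp.image continuous_fst)
    (fun x ⟨p, hp, he⟩ => he ▸ (hKsub hp).1)
  obtain ⟨t, ht⟩ := hcov (Prod.snd '' K) (hKcomp.image continuous_snd)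
    (fun x ⟨p, hp, he⟩ => he ▸ (hKsub hp).2)
  set B := ⋃ g ∈ t, ⋃ h ∈ s,
      (fun x => ((g : GL (Fin n) ℝ))⁻¹ * x * (h : GL (Fin n) ℝ)) '' closure (meetSet H C C)
    with hB
  have hBcomp : IsCompact B := by
    refine (t : Set ↥H).toFinite.isCompact_biUnion fun g _ => ?_
    refine (s : Set ↥H).toFinite.isCompact_biUnion fun h _ => ?_
    exact hM.image (by continuity)
  have hK2 : IsCompact (Prod.snd '' K) := hKcomp.image continuous_snd
  refine IsCompact.of_isClosed_subset (hBcomp.prod hK2) hEclosed ?_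
  rintro ⟨h, ξ⟩ ⟨hhH, hξU, hKmem⟩
  have h1 : tAct h ξ ∈ ⋃ i ∈ s, tAct (i : GL (Fin n) ℝ) '' C := hs ⟨(tAct h ξ, ξ), hKmem, rfl⟩
  have h2 : ξ ∈ ⋃ j ∈ t, tAct (j : GL (Fin n) ℝ) '' C := ht ⟨(tAct h ξ, ξ), hKmem, rfl⟩
  simp only [mem_iUnion, mem_image] at h1 h2
  obtain ⟨i, hi, c₁, hc₁, he₁⟩ := h1
  obtain ⟨j, hj, c₂, hc₂, he₂⟩ := h2
  set m := (j : GL (Fin n) ℝ) * h * (i : GL (Fin n) ℝ)⁻¹ with hm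
  have hmmem : m ∈ meetSet H C C := by
    refine ⟨H.mul_mem (H.mul_mem j.2 hhH) (H.inv_mem i.2), c₂, hc₂, ?_⟩
    have : tAct m c₂ = tAct (i : GL (Fin n) ℝ)⁻¹ (tAct h (tAct (j : GL (Fin n) ℝ) c₂)) := by
      rw [hm, tAct_mul, tAct_mul]
    rw [this, he₂, ← he₁, tAct_inv_tAct]
    exact hc₁
  constructor
  · refine mem_iUnion.2 ⟨j, mem_iUnion.2 ⟨hj, mem_iUnion.2 ⟨i, mem_iUnion.2 ⟨hi, ?_⟩⟩⟩⟩
    refine ⟨m, subset_closure hmmem, ?_⟩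
    simp only [hm]
    group
  · exact ⟨(tAct h ξ, ξ), hKmem, rfl⟩

lemma qs_of_proper (hUopen : IsOpen U) (hUinv : TInvariant H U)
    (hQ : CompactSpace (Quot (orbitRel H U)))
    (hprop : ∀ K : Set ((Fin n → ℝ) × (Fin n → ℝ)), K ⊆ U ×ˢ U → IsCompact K →
      IsCompact {p : GL (Fin n) ℝ × (Fin n → ℝ) |
        p.1 ∈ H ∧ p.2 ∈ U ∧ (tAct p.1 p.2, p.2) ∈ K}) :
    ∃ C : Set (Fin n → ℝ), IsQuasiSection H U C ∧ IsCompact (closure C) ∧ closure C ⊆ U := by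
  choose Kf hKc hKm hKs using fun x : U => exists_compact_subset hUopen x.2
  set V : U → Set (Fin n → ℝ) := fun x => interior (Kf x) with hV
  have hcover : (univ : Set (Quot (orbitRel H U))) ⊆
      ⋃ x : U, Quot.mk (orbitRel H U) '' (Subtype.val ⁻¹' V x) := by
    intro q _
    obtain ⟨y, rfl⟩ := Quot.exists_rep q
    exact mem_iUnion.2 ⟨y, y, hKm y, rfl⟩
  obtain ⟨s, hscov⟩ := isCompact_univ.elim_finite_subcover
    (fun x : U => Quot.mk (orbitRel H U) '' (Subtype.val ⁻¹' V x))
    (fun x => isOpenMap_pi hUopen _ (isOpen_interior.preimage continuous_subtype_val)) hcover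
  set C := ⋃ x ∈ s, V x with hC
  have hCopen : IsOpen C := isOpen_biUnion fun x _ => isOpen_interior
  have hK0 : IsCompact (⋃ x ∈ s, Kf x) := (s : Set U).toFinite.isCompact_biUnion fun x _ => hKc x
  have hCK0 : C ⊆ ⋃ x ∈ s, Kf x :=
    iUnion₂_subset fun x hx => (interior_subset).trans (subset_biUnion_of_mem hx)
  have hclC : closure C ⊆ ⋃ x ∈ s, Kf x := closure_minimal hCK0 hK0.isClosed
  have hclCU : closure C ⊆ U := hclC.trans (iUnion₂_subset fun x _ => hKs x)
  have hCU : C ⊆ U := subset_closure.trans hclCU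
  have hclCcomp : IsCompact (closure C) := hK0.of_isClosed_subset isClosed_closure hclC
  have hOrb : tOrb H C = U := by
    apply Subset.antisymm
    · rintro v ⟨h, hh, c, hc, rfl⟩
      exact hUinv h hh c (hCU hc)
    · intro y hy
      have : Quot.mk (orbitRel H U) ⟨y, hy⟩ ∈
          ⋃ x ∈ s, Quot.mk (orbitRel H U) '' (Subtype.val ⁻¹' V x) := hscov (mem_univ _)
      simp only [mem_iUnion, mem_image, mem_preimage] at this
      obtain ⟨x, hx, z, hz, hq⟩ := this
      obtain ⟨h, hh, he⟩ := (quot_mk_eq_iff _ _).1 hq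
      exact ⟨h, hh, z, mem_biUnion hx hz, he⟩
  have hKsub : closure C ×ˢ closure C ⊆ U ×ˢ U := prod_mono hclCU hclCU
  have hE := hprop _ hKsub (hclCcomp.prod hclCcomp)
  have hfst : IsCompact (Prod.fst '' {p : GL (Fin n) ℝ × (Fin n → ℝ) |
      p.1 ∈ H ∧ p.2 ∈ U ∧ (tAct p.1 p.2, p.2) ∈ closure C ×ˢ closure C}) :=
    hE.image continuous_fst
  have hsub : meetSet H C C ⊆ Prod.fst '' {p : GL (Fin n) ℝ × (Fin n → ℝ) |
      p.1 ∈ H ∧ p.2 ∈ U ∧ (tAct p.1 p.2, p.2) ∈ closure C ×ˢ closure C} := by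
    rintro h ⟨hhH, y, hy, hyC⟩
    exact ⟨(h, y), ⟨hhH, hCU hy, subset_closure hyC, subset_closure hy⟩, rfl⟩
  have hMcomp : IsCompact (closure (meetSet H C C)) :=
    hfst.of_isClosed_subset isClosed_closure (closure_minimal hsub hfst.isClosed)
  exact ⟨C, ⟨hCopen, hCU, hOrb, hMcomp⟩, hclCcomp, hclCU⟩

lemma t2_of_proper (hUopen : IsOpen U)
    (hprop : ∀ K : Set ((Fin n → ℝ) × (Fin n → ℝ)), K ⊆ U ×ˢ U → IsCompact K →
      IsCompact {p : GL (Fin n) ℝ × (Fin n → ℝ) |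
        p.1 ∈ H ∧ p.2 ∈ U ∧ (tAct p.1 p.2, p.2) ∈ K}) :
    T2Space (Quot (orbitRel H U)) := by
  constructor
  intro a b hab
  obtain ⟨x, rfl⟩ := Quot.exists_rep a
  obtain ⟨y, rfl⟩ := Quot.exists_rep b
  have hnrel : ¬ orbitRel H U x y := fun hr => hab ((quot_mk_eq_iff x y).2 hr)
  obtain ⟨Kx, hKxc, hxm, hKxU⟩ := exists_compact_subset hUopen x.2
  obtain ⟨Ky, hKyc, hym, hKyU⟩ := exists_compact_subset hUopen y.2
  have hKsub : Ky ×ˢ Kx ⊆ U ×ˢ U := prod_mono hKyU hKxU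
  have hE := hprop _ hKsub (hKyc.prod hKxc)
  set D := (fun p : GL (Fin n) ℝ × (Fin n → ℝ) => (p.2, tAct p.1 p.2)) ''
      {p : GL (Fin n) ℝ × (Fin n → ℝ) |
        p.1 ∈ H ∧ p.2 ∈ U ∧ (tAct p.1 p.2, p.2) ∈ Ky ×ˢ Kx} with hD
  have hDcomp : IsCompact D := hE.image (continuous_snd.prodMk continuous_tAct)
  have hxyD : ((x : Fin n → ℝ), (y : Fin n → ℝ)) ∈ Dᶜ := by
    rintro ⟨⟨h, ξ⟩, ⟨hh, hξU, _⟩, heq⟩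
    obtain ⟨h1, h2⟩ := Prod.mk.injEq .. ▸ heq
    exact hnrel ⟨h, hh, by rw [h1] at h2; exact h2⟩
  obtain ⟨A, B, hAopen, hBopen, hxA, hyB, hABD⟩ :=
    isOpen_prod_iff.1 hDcomp.isClosed.isOpen_compl _ _ hxyD
  refine ⟨Quot.mk _ '' (Subtype.val ⁻¹' (A ∩ interior Kx)),
    Quot.mk _ '' (Subtype.val ⁻¹' (B ∩ interior Ky)),
    isOpenMap_pi hUopen _ (((hAopen.inter isOpen_interior)).preimage continuous_subtype_val),
    isOpenMap_pi hUopen _ (((hBopen.inter isOpen_interior)).preimage continuous_subtype_val),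
    ⟨x, ⟨hxA, hxm⟩, rfl⟩, ⟨y, ⟨hyB, hym⟩, rfl⟩, ?_⟩
  rw [Set.disjoint_left]
  rintro q ⟨u, ⟨huA, huKx⟩, hqu⟩ ⟨w, ⟨hwB, hwKy⟩, hqw⟩
  have hrel : orbitRel H U u w := (quot_mk_eq_iff u w).1 (hqu.trans hqw.symm)
  obtain ⟨h, hh, he⟩ := hrel
  have hmemE : (h, (u : Fin n → ℝ)) ∈ {p : GL (Fin n) ℝ × (Fin n → ℝ) |
      p.1 ∈ H ∧ p.2 ∈ U ∧ (tAct p.1 p.2, p.2) ∈ Ky ×ˢ Kx} := by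
    refine ⟨hh, u.2, ?_⟩
    rw [he]
    exact ⟨interior_subset hwKy, interior_subset huKx⟩
  have : ((u : Fin n → ℝ), (w : Fin n → ℝ)) ∈ D := ⟨(h, u), hmemE, by simp [he]⟩
  exact hABD ⟨huA, hwB⟩ this

lemma metrizable_of (hUopen : IsOpen U) (hT2 : T2Space (Quot (orbitRel H U)))
    (hQ : CompactSpace (Quot (orbitRel H U))) :
    TopologicalSpace.MetrizableSpace (Quot (orbitRel H U)) := by
  haveI := hT2; haveI := hQ
  haveI : SecondCountableTopology (Quot (orbitRel H U)) :=
    (isQuotientMap_quot_mk).secondCountableTopology (isOpenMap_pi hUopen)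
  infer_instance

/-- For `U` open and `Hᵀ`-invariant, the following are equivalent:
(a) there is a topological quasi-section `C ⊆ U` with compact closure contained in `U`;
(b) `U/Hᵀ` is compact and the action of `H` on `U` is proper. Moreover, if these hold,
`U/Hᵀ` is Hausdorff and metrizable. -/
theorem quasiSection_compactClosure_iff_proper
    (H : Subgroup (GL (Fin n) ℝ)) (hH : IsClosed (H : Set (GL (Fin n) ℝ)))
    (U : Set (Fin n → ℝ)) (hUopen : IsOpen U) (hUinv : TInvariant H U) :
    ((∃ C : Set (Fin n → ℝ), IsQuasiSection H U C ∧ IsCompact (closure C) ∧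
        closure C ⊆ U) ↔
      (CompactSpace (Quot (orbitRel H U)) ∧
        ∀ K : Set ((Fin n → ℝ) × (Fin n → ℝ)), K ⊆ U ×ˢ U → IsCompact K →
          IsCompact {p : GL (Fin n) ℝ × (Fin n → ℝ) |
            p.1 ∈ H ∧ p.2 ∈ U ∧ (tAct p.1 p.2, p.2) ∈ K})) ∧
    ((∃ C : Set (Fin n → ℝ), IsQuasiSection H U C ∧ IsCompact (closure C) ∧
        closure C ⊆ U) →
      T2Space (Quot (orbitRel H U)) ∧
        TopologicalSpace.MetrizableSpace (Quot (orbitRel H U))) := by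
  have iff1 : (∃ C : Set (Fin n → ℝ), IsQuasiSection H U C ∧ IsCompact (closure C) ∧
        closure C ⊆ U) ↔
      (CompactSpace (Quot (orbitRel H U)) ∧
        ∀ K : Set ((Fin n → ℝ) × (Fin n → ℝ)), K ⊆ U ×ˢ U → IsCompact K →
          IsCompact {p : GL (Fin n) ℝ × (Fin n → ℝ) |
            p.1 ∈ H ∧ p.2 ∈ U ∧ (tAct p.1 p.2, p.2) ∈ K}) := by
    constructor
    · rintro ⟨C, ⟨hCopen, hCU, hOrb, hM⟩, hclc, hclU⟩
      exact ⟨quot_compact hOrb hCU hclc hclU,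
        fun K hKsub hKcomp => proper_of_qs hH hCopen hCU hOrb hM hKsub hKcomp⟩
    · rintro ⟨hQ, hprop⟩
      exact qs_of_proper hUopen hUinv hQ hprop
  refine ⟨iff1, fun hex => ?_⟩
  obtain ⟨hQ, hprop⟩ := iff1.1 hex
  have hT2 := t2_of_proper hUopen hprop
  exact ⟨hT2, metrizable_of hUopen hT2 hQ⟩
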